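/- Suppose ω, ψ : ℝ → ℝ are odd, 2π-periodic functions, ψ is C², and −ψ'' = ω. Then the derivative of ψ at the origin is given by ψ'(0) = −(1/2π) ∫_0^{2π} y ω(y) dy, and for every x one has the representation ψ(x) = ∫_0^{x} (y − x) ω(y) dy + x ψ'(0). -/

import Mathlib

open Real MeasureTheory

/-- One-dimensional Biot–Savart law: if `ω, ψ` are odd `2π`-periodic, `ψ` is `C²` and
`−ψ'' = ω`, then `ψ'(0) = −(1/2π) ∫₀^{2π} y ω(y) dy` and
`ψ(x) = ∫₀ˣ (y − x) ω(y) dy + x ψ'(0)` for every `x`. -/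
theorem stmt9 (ω ψ : ℝ → ℝ)
    (hωodd : ∀ x, ω (-x) = -(ω x)) (hψodd : ∀ x, ψ (-x) = -(ψ x))
    (hωper : ∀ x, ω (x + 2*π) = ω x) (hψper : ∀ x, ψ (x + 2*π) = ψ x)
    (hψ : ContDiff ℝ 2 ψ)
    (hBS : ∀ x, -(deriv (deriv ψ) x) = ω x) :
    deriv ψ 0 = -(1/(2*π)) * (∫ y in (0:ℝ)..(2*π), y * ω y) ∧
    ∀ x : ℝ, ψ x = (∫ y in (0:ℝ)..x, (y - x) * ω y) + x * deriv ψ 0 := by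
  have h2 : (2 : WithTop ℕ∞) = 1 + 1 := by norm_num
  rw [h2] at hψ
  have hψ1 : ContDiff ℝ 1 (deriv ψ) := (contDiff_succ_iff_deriv.mp hψ).2.2
  have hψd : Differentiable ℝ ψ := hψ.differentiable (by norm_num)
  have hψd1 : Differentiable ℝ (deriv ψ) := hψ1.differentiable one_ne_zero
  have hωc : Continuous ω := by
    have h3 : Continuous (deriv (deriv ψ)) := hψ1.continuous_deriv le_rfl
    have h4 : Continuous (fun x => -(deriv (deriv ψ) x)) := h3.neg
    simpa only [hBS] using h4
  -- G x = ∫₀ˣ ω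
  set G : ℝ → ℝ := fun x => ∫ y in (0:ℝ)..x, ω y with hG
  have hGderiv : ∀ x, HasDerivAt G (ω x) x := fun x =>
    (hωc.integral_hasStrictDerivAt 0 x).hasDerivAt
  have hGd : Differentiable ℝ G := fun x => (hGderiv x).differentiableAt
  -- deriv ψ x = deriv ψ 0 - G x
  have key1 : ∀ x, deriv ψ x = deriv ψ 0 - G x := by
    have hconst : ∀ x y, (fun x => deriv ψ x + G x) x = (fun x => deriv ψ x + G x) y := by
      apply is_const_of_deriv_eq_zero (hψd1.add hGd)
      intro x
      have h : HasDerivAt (fun x => deriv ψ x + G x) (deriv (deriv ψ) x + ω x) x :=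
        ((hψd1 x).hasDerivAt.add (hGderiv x))
      rw [show (deriv ψ + G) = (fun x => deriv ψ x + G x) from rfl, h.deriv]
      have := hBS x
      linarith
    intro x
    have := hconst x 0
    simp only [hG, intervalIntegral.integral_same] at this ⊢
    linarith
  -- ψ x = x * deriv ψ 0 - ∫₀ˣ G
  have key2 : ∀ x, ψ x = x * deriv ψ 0 - ∫ y in (0:ℝ)..x, G y := by
    have hGc : Continuous G := hGd.continuous
    have hIderiv : ∀ x, HasDerivAt (fun x => ∫ y in (0:ℝ)..x, G y) (G x) x := fun x =>
      (hGc.integral_hasStrictDerivAt 0 x).hasDerivAt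
    have hψ0 : ψ 0 = 0 := by have := hψodd 0; simp at this; linarith
    have hconst : ∀ x y,
        (fun x => ψ x - x * deriv ψ 0 + ∫ y in (0:ℝ)..x, G y) x
          = (fun x => ψ x - x * deriv ψ 0 + ∫ y in (0:ℝ)..x, G y) y := by
      apply is_const_of_deriv_eq_zero
      · exact (hψd.sub (differentiable_id.mul_const _)).add
          (fun x => (hIderiv x).differentiableAt)
      · intro x
        have h : HasDerivAt (fun x => ψ x - x * deriv ψ 0 + ∫ y in (0:ℝ)..x, G y)
            (deriv ψ x - 1 * deriv ψ 0 + G x) x :=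
          ((hψd x).hasDerivAt.sub ((hasDerivAt_id x).mul_const _)).add (hIderiv x)
        rw [h.deriv, key1 x]
        ring
    intro x
    have := hconst x 0
    simp only [intervalIntegral.integral_same, hψ0] at this
    linarith
  -- by parts: ∫₀ˣ G = x * G x - ∫₀ˣ y ω y
  have keyparts : ∀ x : ℝ, ∫ y in (0:ℝ)..x, G y = x * G x - ∫ y in (0:ℝ)..x, y * ω y := by
    intro x
    have h := intervalIntegral.integral_deriv_mul_eq_sub (a := 0) (b := x)
      (u := fun y => y) (v := G) (u' := fun _ => 1) (v' := ω)
      (fun y _ => hasDerivAt_id y) (fun y _ => hGderiv y)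
      (intervalIntegrable_const) (hωc.intervalIntegrable 0 x)
    simp only [one_mul, hG, intervalIntegral.integral_same, mul_zero, sub_zero] at h
    have hsplit : (∫ y in (0:ℝ)..x, G y + y * ω y)
        = (∫ y in (0:ℝ)..x, G y) + ∫ y in (0:ℝ)..x, y * ω y := by
      exact intervalIntegral.integral_add (hGd.continuous.intervalIntegrable 0 x)
        (((continuous_id'.mul hωc) : Continuous fun y => y * ω y).intervalIntegrable 0 x)
    rw [hsplit] at h
    linarith
  -- representation
  have hrep : ∀ x : ℝ, ψ x = (∫ y in (0:ℝ)..x, (y - x) * ω y) + x * deriv ψ 0 := by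
    intro x
    have hF : (∫ y in (0:ℝ)..x, (y - x) * ω y)
        = (∫ y in (0:ℝ)..x, y * ω y) - x * G x := by
      have : ∀ y, (y - x) * ω y = y * ω y - x * ω y := fun y => by ring
      simp_rw [this]
      rw [intervalIntegral.integral_sub
        ((show Continuous fun y => y * ω y from continuous_id'.mul hωc).intervalIntegrable 0 x)
        ((show Continuous fun y => x * ω y from continuous_const.mul hωc).intervalIntegrable 0 x),
        intervalIntegral.integral_const_mul]
    rw [hF, key2 x, keyparts x]
    ring
  refine ⟨?_, hrep⟩
  -- ∫₀^{2π} ω = 0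
  have hG2π : G (2*π) = 0 := by
    have hper : Function.Periodic ω (2*π) := hωper
    have hshift : (∫ y in (-π)..(-π + 2*π), ω y) = ∫ y in (0:ℝ)..(0 + 2*π), ω y :=
      hper.intervalIntegral_add_eq (-π) 0
    have hneg : (∫ y in (-π)..(0:ℝ), ω y) = -∫ y in (0:ℝ)..π, ω y := by
      have := intervalIntegral.integral_comp_neg (a := 0) (b := π) (f := ω)
      simp only [neg_zero] at this
      rw [← this]
      simp_rw [hωodd]
      rw [intervalIntegral.integral_neg]
    have hadd : (∫ y in (-π)..(0:ℝ), ω y) + (∫ y in (0:ℝ)..π, ω y) = ∫ y in (-π)..π, ω y :=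
      intervalIntegral.integral_add_adjacent_intervals (hωc.intervalIntegrable _ _)
        (hωc.intervalIntegrable _ _)
    have : (∫ y in (-π)..π, ω y) = 0 := by rw [← hadd, hneg]; ring
    have he : (-π + 2*π : ℝ) = π := by ring
    rw [he] at hshift
    simp only [zero_add] at hshift
    simp only [hG]
    rw [← hshift, this]
  have hψ2π : ψ (2*π) = 0 := by
    have h1 := hψper 0
    have h0 : ψ 0 = 0 := by have := hψodd 0; simp at this; linarith
    simp only [zero_add] at h1
    linarith
  have := hrep (2*π)
  rw [hψ2π] at this
  have hF2π : (∫ y in (0:ℝ)..(2*π), (y - 2*π) * ω y)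
      = (∫ y in (0:ℝ)..(2*π), y * ω y) - 2*π * G (2*π) := by
    have heq : ∀ y, (y - 2*π) * ω y = y * ω y - 2*π * ω y := fun y => by ring
    simp_rw [heq]
    rw [intervalIntegral.integral_sub
      ((show Continuous fun y => y * ω y from continuous_id'.mul hωc).intervalIntegrable 0 _)
      ((show Continuous fun y => 2*π * ω y from continuous_const.mul hωc).intervalIntegrable 0 _),
      intervalIntegral.integral_const_mul]
  rw [hF2π, hG2π] at this
  have hπ : (2*π : ℝ) ≠ 0 := by positivity
  field_simp
  nlinarith [this]
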